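/- For all n, k ∈ ℕ with n ≥ k ≥ 1, the hybrid code γ^h_{n,k} is ⌈k/2⌉-recoverable. -/

import Mathlib

/-- Resolution of a ternary word (`none` is the metastable value `M`). -/
def res {n : ℕ} (x : Fin n → Option Bool) : Set (Fin n → Bool) :=
  {y | ∀ j : Fin n, ∀ b : Bool, x j = some b → y j = b}

open Classical in
/-- Extended codeword: pointwise superposition of all codewords `γ a`, `a ∈ I`. -/
noncomputable def extCW {M n : ℕ} (γ : Fin M → Fin n → Bool) (I : Set (Fin M)) :
    Fin n → Option Bool :=
  fun j =>
    if ∀ a ∈ I, γ a j = true then some true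
    else if ∀ a ∈ I, γ a j = false then some false
    else none

/-- The interval `⟨i, i+p⟩ = {i, ..., i+p}` inside `{0, ..., M-1}`. -/
def intvl (M i p : ℕ) : Set (Fin M) := {a : Fin M | i ≤ a.val ∧ a.val ≤ i + p}

/-- A code is `k`-recoverable if some extension `dec` of the decoding function
maps every resolution of the extended codeword of an interval of imprecision
at most `k` back into that interval. -/
def Recoverable {M n : ℕ} (γ : Fin M → Fin n → Bool) (k : ℕ) : Prop :=
  ∃ dec : (Fin n → Bool) → Fin M,
    (∀ v : Fin M, dec (γ v) = v) ∧
    ∀ i p : ℕ, p ≤ k → i + p < M →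
      ∀ y ∈ res (extCW γ (intvl M i p)), dec y ∈ intvl M i p

/-- The binary reflected Gray code, position `0` is the most significant bit. -/
def brgc : (n : ℕ) → Fin (2^n) → Fin n → Bool
  | 0 => fun _ => fun i => i.elim0
  | n+1 => fun i =>
      if h : i.val < 2^n then Fin.cons false (brgc n ⟨i.val, h⟩)
      else Fin.cons true (brgc n ⟨2^(n+1) - i.val - 1, by
        have h1 := i.isLt
        have h2 : (2:ℕ)^(n+1) = 2^n * 2 := pow_succ 2 n
        omega⟩)

/-- Unary thermometer codeword `1^m 0^(k-m)`. -/
def unary (k m : ℕ) : Fin k → Bool := fun j => decide (j.val < m)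

/-- Unary thermometer codeword `0^m 1^(k-m)`. -/
def unaryBar (k m : ℕ) : Fin k → Bool := fun j => decide (m ≤ j.val)

/-- Parity of a Boolean word: `true` iff the number of `1`s is odd. -/
def parityW {m : ℕ} (x : Fin m → Bool) : Bool :=
  decide ((Finset.univ.filter (fun i : Fin m => x i = true)).card % 2 = 1)

/-- The hybrid code `γ^h_{n,k}`: an `n`-bit BRGC part followed by a `k`-bit
unary part whose flavor is selected by the parity of the BRGC part. -/
def hybrid (n k : ℕ) : Fin (2^n * (k+1)) → Fin (n + k) → Bool :=
  fun i =>
    let xg : Fin n → Bool := brgc n ⟨i.val / (k+1), Nat.div_lt_of_lt_mul (mul_comm (2^n) (k+1) ▸ i.isLt)⟩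
    let xu : Fin k → Bool :=
      if parityW xg = false then unary k (i.val % (k+1)) else unaryBar k (i.val % (k+1))
    Fin.append xg xu

def brgcInv : (n : ℕ) → (Fin n → Bool) → ℕ
  | 0, _ => 0
  | n+1, x => if x 0 = false then brgcInv n (fun j => x j.succ)
              else 2^(n+1) - 1 - brgcInv n (fun j => x j.succ)

theorem brgcInv_lt : ∀ (n : ℕ) (x : Fin n → Bool), brgcInv n x < 2^n := by
  intro n
  induction n with
  | zero => intro x; simp [brgcInv]
  | succ n ih =>
    intro x
    have h2 : (2:ℕ)^(n+1) = 2^n * 2 := pow_succ 2 n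
    have := ih (fun j => x j.succ)
    unfold brgcInv
    split <;> omega

theorem brgcInv_brgc : ∀ (n : ℕ) (i : Fin (2^n)), brgcInv n (brgc n i) = i.val := by
  intro n
  induction n with
  | zero => intro i; have := i.isLt; interval_cases h : i.val <;> simp [brgcInv]
  | succ n ih =>
    intro i
    have h2 : (2:ℕ)^(n+1) = 2^n * 2 := pow_succ 2 n
    have hlt := i.isLt
    unfold brgc
    by_cases h : i.val < 2^n
    · simp only [dif_pos h]
      have e : brgcInv (n+1) (Fin.cons false (brgc n ⟨i.val, h⟩))
          = brgcInv n (fun j => (Fin.cons false (brgc n ⟨i.val, h⟩) : Fin (n+1) → Bool) j.succ) := by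
        simp [brgcInv]
      rw [e]
      simp only [Fin.cons_succ]
      rw [ih]
    · simp only [dif_neg h]
      have hb : 2^(n+1) - i.val - 1 < 2^n := by omega
      have e : brgcInv (n+1) (Fin.cons true (brgc n ⟨2^(n+1) - i.val - 1, hb⟩))
          = 2^(n+1) - 1 - brgcInv n (fun j => (Fin.cons true (brgc n ⟨2^(n+1) - i.val - 1, hb⟩) : Fin (n+1) → Bool) j.succ) := by
        simp [brgcInv]
      rw [e]
      simp only [Fin.cons_succ]
      rw [ih]
      simp only
      omega

theorem parityW_cons {n : ℕ} (b : Bool) (x : Fin n → Bool) :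
    parityW (Fin.cons b x : Fin (n+1) → Bool) = xor b (parityW x) := by
  unfold parityW
  rw [Finset.card_filter, Finset.card_filter, Fin.sum_univ_succ]
  simp only [Fin.cons_zero, Fin.cons_succ]
  cases b
  · simp
  · simp only [Bool.true_xor, if_pos rfl]
    set S := ∑ i : Fin n, if x i = true then 1 else 0 with hS
    rcases Nat.mod_two_eq_zero_or_one S with hm | hm <;> simp [Nat.add_mod, hm]

theorem parity_brgc : ∀ (n : ℕ) (i : Fin (2^n)),
    parityW (brgc n i) = decide (i.val % 2 = 1) := by
  intro n
  induction n with
  | zero =>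
    intro i; have := i.isLt
    have : i.val = 0 := by omega
    simp [parityW, this]
  | succ n ih =>
    intro i
    have h2 : (2:ℕ)^(n+1) = 2^n * 2 := pow_succ 2 n
    have hlt := i.isLt
    unfold brgc
    by_cases h : i.val < 2^n
    · simp only [dif_pos h]
      rw [parityW_cons, ih]
      simp
    · simp only [dif_neg h]
      rw [parityW_cons, ih]
      simp only [Bool.true_xor]
      have : (2^(n+1) - i.val - 1) % 2 = (i.val + 1) % 2 := by omega
      rw [this]
      rcases Nat.mod_two_eq_zero_or_one i.val with hm | hm <;>
        simp [Nat.add_mod, hm]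

theorem brgc_succ_agree : ∀ (n : ℕ) (i : ℕ) (h : i + 1 < 2^n),
    ∃ j0 : Fin n, ∀ j : Fin n, j ≠ j0 →
      brgc n ⟨i, by omega⟩ j = brgc n ⟨i+1, h⟩ j := by
  intro n
  induction n with
  | zero => intro i h; simp at h
  | succ n ih =>
    intro i h
    have h2 : (2:ℕ)^(n+1) = 2^n * 2 := pow_succ 2 n
    by_cases h1 : i + 1 < 2^n
    · obtain ⟨j0, hj0⟩ := ih i h1
      refine ⟨j0.succ, fun j hj => ?_⟩
      unfold brgc
      rw [dif_pos (by omega : i < 2^n), dif_pos (by omega : i + 1 < 2^n)]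
      rcases Fin.eq_zero_or_eq_succ j with rfl | ⟨j', rfl⟩
      · simp
      · simp only [Fin.cons_succ]
        exact hj0 j' (by simpa using hj)
    · by_cases hm : i + 1 = 2^n
      · refine ⟨0, fun j hj => ?_⟩
        unfold brgc
        rw [dif_pos (by omega : i < 2^n), dif_neg (by omega : ¬ (i+1 < 2^n))]
        rcases Fin.eq_zero_or_eq_succ j with rfl | ⟨j', rfl⟩
        · exact absurd rfl hj
        · simp only [Fin.cons_succ]
          congr 1
          apply Fin.ext
          simp only
          omega
      · -- i ≥ 2^n
        have hge : 2^n ≤ i := by omega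
        have h1' : (2^(n+1) - (i+1) - 1) + 1 < 2^n := by omega
        obtain ⟨j0, hj0⟩ := ih (2^(n+1) - (i+1) - 1) h1'
        refine ⟨j0.succ, fun j hj => ?_⟩
        unfold brgc
        rw [dif_neg (by omega : ¬ (i < 2^n)), dif_neg (by omega : ¬ (i+1 < 2^n))]
        rcases Fin.eq_zero_or_eq_succ j with rfl | ⟨j', rfl⟩
        · simp
        · simp only [Fin.cons_succ]
          have e1 : (⟨2^(n+1) - i - 1, by omega⟩ : Fin (2^n))
              = ⟨(2^(n+1) - (i+1) - 1) + 1, h1'⟩ := by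
            apply Fin.ext; simp only; omega
          rw [e1]
          exact (hj0 j' (by simpa using hj)).symm

def yExt {k : ℕ} (y : Fin k → Bool) : ℕ → Bool :=
  fun j => if h : j < k then y ⟨j, h⟩ else false

open Classical in
noncomputable def decU1 (k : ℕ) (y : Fin k → Bool) : ℕ :=
  if yExt y (k/2) = true then
    Nat.find (p := fun s => ∀ j, s ≤ j → j ≤ k/2 → yExt y j = true)
      ⟨k/2+1, fun j h1 h2 => absurd h2 (by omega)⟩
  else
    Nat.find (p := fun e => k/2 ≤ e ∧ (k ≤ e ∨ yExt y e = true))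
      ⟨k, ⟨Nat.div_le_self k 2, Or.inl le_rfl⟩⟩

open Classical in
theorem decU1_le {k : ℕ} (hk : 1 ≤ k) (y : Fin k → Bool) : decU1 k y ≤ k := by
  unfold decU1
  split
  · exact le_trans (Nat.find_min' _ (m := k/2+1) (fun j h1 h2 => absurd h2 (by omega))) (by omega)
  · exact Nat.find_min' _ ⟨Nat.div_le_self k 2, Or.inl le_rfl⟩

open Classical in
theorem decU1_ge_of_false {k : ℕ} (hk : 1 ≤ k) (y : Fin k → Bool)
    {b : ℕ} (hb : b ≤ k/2) (hbf : yExt y b = false) : b < decU1 k y := by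
  unfold decU1
  split
  · rename_i hmid
    by_contra hcon
    push_neg at hcon
    have hsp := Nat.find_spec (p := fun s => ∀ j, s ≤ j → j ≤ k/2 → yExt y j = true)
      ⟨k/2+1, fun j h1 h2 => absurd h2 (by omega)⟩
    have := hsp b (by omega) hb
    rw [hbf] at this; exact absurd this (by simp)
  · by_contra hcon
    push_neg at hcon
    have hsp := Nat.find_spec (p := fun e => k/2 ≤ e ∧ (k ≤ e ∨ yExt y e = true))
      ⟨k, ⟨Nat.div_le_self k 2, Or.inl le_rfl⟩⟩
    set F := Nat.find (p := fun e => k/2 ≤ e ∧ (k ≤ e ∨ yExt y e = true))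
      ⟨k, ⟨Nat.div_le_self k 2, Or.inl le_rfl⟩⟩ with hF
    have h1 : k/2 ≤ F := hsp.1
    have h2 : F = b := by omega
    rcases hsp.2 with h3 | h3
    · omega
    · rw [h2, hbf] at h3; exact absurd h3 (by simp)

open Classical in
theorem decU1_scenD {k : ℕ} (hk : 1 ≤ k) (y : Fin k → Bool) (r0 p : ℕ)
    (hrp : r0 + p ≤ k)
    (h0 : ∀ j, j < r0 → yExt y j = false)
    (h1 : ∀ j, r0 + p ≤ j → j < k → yExt y j = true) :
    r0 ≤ decU1 k y ∧ decU1 k y ≤ r0 + p := by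
  constructor
  · cases hmid : yExt y (k/2) with
    | false =>
      unfold decU1
      rw [if_neg (by simp [hmid])]
      set F := Nat.find (p := fun e => k/2 ≤ e ∧ (k ≤ e ∨ yExt y e = true))
        ⟨k, ⟨Nat.div_le_self k 2, Or.inl le_rfl⟩⟩ with hF
      have hsp := Nat.find_spec (p := fun e => k/2 ≤ e ∧ (k ≤ e ∨ yExt y e = true))
        ⟨k, ⟨Nat.div_le_self k 2, Or.inl le_rfl⟩⟩
      rw [← hF] at hsp
      by_contra hcon
      push_neg at hcon
      rcases hsp.2 with h3 | h3
      · omega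
      · rw [h0 F hcon] at h3; exact absurd h3 (by simp)
    | true =>
      have hr0 : r0 ≤ k/2 := by
        by_contra hc
        push_neg at hc
        rw [h0 (k/2) hc] at hmid; exact absurd hmid (by simp)
      rcases Nat.eq_zero_or_pos r0 with h | h
      · omega
      · have := decU1_ge_of_false hk y (b := r0 - 1) (by omega) (h0 _ (by omega))
        omega
  · cases hmid : yExt y (k/2) with
    | true =>
      unfold decU1
      rw [if_pos hmid]
      exact Nat.find_min' _ (m := r0 + p) (fun j hj1 hj2 => h1 j hj1 (by omega))
    | false =>
      have hmlt : k/2 < r0 + p := by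
        by_contra hc
        push_neg at hc
        rw [h1 (k/2) hc (by omega)] at hmid; exact absurd hmid (by simp)
      unfold decU1
      rw [if_neg (by simp [hmid])]
      refine Nat.find_min' _ (m := r0 + p) ⟨by omega, ?_⟩
      rcases Nat.lt_or_ge (r0 + p) k with h | h
      · exact Or.inr (h1 _ le_rfl h)
      · exact Or.inl (by omega)

open Classical in
theorem decU1_scenB {k : ℕ} (hk : 1 ≤ k) (y : Fin k → Bool) (r1 r0 : ℕ)
    (hr1 : r1 ≤ k/2) (hr0 : k/2 < r0)
    (h : ∀ j, r1 ≤ j → j < r0 → yExt y j = true) :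
    decU1 k y ≤ r1 := by
  have hmid : yExt y (k/2) = true := h _ hr1 hr0
  unfold decU1
  rw [if_pos hmid]
  exact Nat.find_min' _ (m := r1) (fun j hj1 hj2 => h j hj1 (by omega))

open Classical in
theorem decU1_scenC {k : ℕ} (hk : 1 ≤ k) (y : Fin k → Bool) (r1 r0 : ℕ)
    (hr1 : r1 ≤ k/2) (hr0 : k/2 < r0) (hr0k : r0 ≤ k)
    (h : ∀ j, r1 ≤ j → j < r0 → yExt y j = false) :
    r0 ≤ decU1 k y := by
  have hmid : yExt y (k/2) = false := h _ hr1 hr0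
  unfold decU1
  rw [if_neg (by simp [hmid])]
  set F := Nat.find (p := fun e => k/2 ≤ e ∧ (k ≤ e ∨ yExt y e = true))
    ⟨k, ⟨Nat.div_le_self k 2, Or.inl le_rfl⟩⟩ with hF
  have hsp := Nat.find_spec (p := fun e => k/2 ≤ e ∧ (k ≤ e ∨ yExt y e = true))
    ⟨k, ⟨Nat.div_le_self k 2, Or.inl le_rfl⟩⟩
  rw [← hF] at hsp
  by_contra hcon
  push_neg at hcon
  rcases hsp.2 with h3 | h3
  · omega
  · rw [h F (by omega) hcon] at h3; exact absurd h3 (by simp)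

theorem decU1_unaryBar {k : ℕ} (hk : 1 ≤ k) (r : ℕ) (hr : r ≤ k) :
    decU1 k (fun j => decide (r ≤ j.val)) = r := by
  have := decU1_scenD hk (fun j => decide (r ≤ j.val)) r 0 (by omega)
    (fun j hj => by simp [yExt]; intro h; omega)
    (fun j hj1 hj2 => by simp [yExt, hj2]; omega)
  omega

noncomputable def decHyb (n k : ℕ) (y : Fin (n+k) → Bool) : Fin (2^n * (k+1)) :=
  let yg : Fin n → Bool := fun j => y (Fin.castAdd k j)
  let yu : Fin k → Bool := fun j => y (Fin.natAdd n j)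
  let u := if parityW yg = true then decU1 k yu else decU1 k (fun j => ! yu j)
  ⟨(brgcInv n yg) * (k+1) + min u k, by
    have h1 := brgcInv_lt n yg
    have h2 : min u k ≤ k := min_le_right _ _
    calc (brgcInv n yg) * (k+1) + min u k < (brgcInv n yg) * (k+1) + (k+1) :=
          Nat.add_lt_add_left (by omega) _
      _ = (brgcInv n yg + 1) * (k+1) := by ring
      _ ≤ 2^n * (k+1) := Nat.mul_le_mul_right _ (by omega)⟩

theorem decHyb_codeword (n k : ℕ) (hk : 1 ≤ k) (v : Fin (2^n * (k+1))) :
    decHyb n k (hybrid n k v) = v := by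
  have hq : v.val / (k+1) < 2^n := Nat.div_lt_of_lt_mul (mul_comm (2^n) (k+1) ▸ v.isLt)
  have hr : v.val % (k+1) < k+1 := Nat.mod_lt _ (by omega)
  set Q : Fin (2^n) := ⟨v.val / (k+1), hq⟩ with hQ
  have hyg : (fun j => hybrid n k v (Fin.castAdd k j)) = brgc n Q := by
    funext j
    simp [hybrid, Fin.append_left, hQ]
  have hyu : ∀ j : Fin k, hybrid n k v (Fin.natAdd n j)
      = (if parityW (brgc n Q) = false then unary k (v.val % (k+1))
         else unaryBar k (v.val % (k+1))) j := by
    intro j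
    simp [hybrid, Fin.append_right, hQ]
  unfold decHyb
  simp only [hyg, hyu]
  apply Fin.ext
  simp only
  rw [brgcInv_brgc]
  have hmain : (if parityW (brgc n Q) = true
      then decU1 k (fun j => (if parityW (brgc n Q) = false then unary k (v.val % (k+1))
         else unaryBar k (v.val % (k+1))) j)
      else decU1 k (fun j => ! (if parityW (brgc n Q) = false then unary k (v.val % (k+1))
         else unaryBar k (v.val % (k+1))) j)) = v.val % (k+1) := by
    cases hpar : parityW (brgc n Q) with
    | false =>
      simp only [Bool.false_eq_true, if_false, eq_self_iff_true, if_true]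
      have e2 : (fun j : Fin k => ! unary k (v.val % (k+1)) j)
          = fun j : Fin k => decide (v.val % (k+1) ≤ j.val) := by
        funext j
        by_cases h : j.val < v.val % (k+1) <;> simp [unary, h] <;> omega
      rw [e2, decU1_unaryBar hk _ (by omega)]
    | true =>
      simp only [Bool.true_eq_false, if_false, eq_self_iff_true, if_true]
      exact decU1_unaryBar hk _ (by omega)
  rw [hmain]
  have hmin : min (v.val % (k+1)) k = v.val % (k+1) := min_eq_left (by omega)
  rw [hmin]
  have hdm := Nat.div_add_mod v.val (k+1)
  show (v.val / (k+1)) * (k+1) + v.val % (k+1) = v.val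
  rw [Nat.mul_comm]
  omega

theorem decHyb_val (n k : ℕ) (y : Fin (n+k) → Bool) :
    (decHyb n k y).val = (brgcInv n (fun j => y (Fin.castAdd k j))) * (k+1)
      + min (if parityW (fun j => y (Fin.castAdd k j)) = true
             then decU1 k (fun j => y (Fin.natAdd n j))
             else decU1 k (fun j => ! y (Fin.natAdd n j))) k := rfl

theorem hybrid_recoverable (n k : ℕ) (hk : 1 ≤ k) (hnk : k ≤ n) :
    Recoverable (hybrid n k) ((k+1)/2) := by
  refine ⟨decHyb n k, fun v => decHyb_codeword n k hk v, ?_⟩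
  intro i p hp hiM y hy
  have hk1 : 0 < k + 1 := by omega
  set q := i / (k+1) with hqdef
  set r0 := i % (k+1) with hr0def
  have hdm : (k+1) * q + r0 = i := Nat.div_add_mod i (k+1)
  have hr0lt : r0 < k+1 := Nat.mod_lt _ hk1
  have hqlt : q < 2^n := by
    apply Nat.div_lt_of_lt_mul
    rw [Nat.mul_comm]
    omega
  -- resolution extraction
  have hres : ∀ (j : Fin (n+k)) (b : Bool),
      (∀ a : Fin (2^n*(k+1)), i ≤ a.val → a.val ≤ i + p → hybrid n k a j = b) →
      y j = b := by
    intro j b hall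
    apply hy j b
    show extCW (hybrid n k) (intvl (2^n*(k+1)) i p) j = some b
    unfold extCW
    cases b with
    | true => rw [if_pos (fun a ha => hall a ha.1 ha.2)]
    | false =>
      rw [if_neg, if_pos (fun a ha => hall a ha.1 ha.2)]
      intro hcon
      have h1 := hcon ⟨i, by omega⟩ ⟨le_rfl, Nat.le_add_right i p⟩
      have h2 := hall ⟨i, by omega⟩ le_rfl (Nat.le_add_right i p)
      rw [h1] at h2
      exact absurd h2 (by simp)
  -- coordinate formulas
  have hcg : ∀ (a : Fin (2^n*(k+1))) (j : Fin n) (h : a.val/(k+1) < 2^n),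
      hybrid n k a (Fin.castAdd k j) = brgc n ⟨a.val/(k+1), h⟩ j := by
    intro a j h
    simp [hybrid, Fin.append_left]
  have hcu : ∀ (a : Fin (2^n*(k+1))) (j : Fin k) (h : a.val/(k+1) < 2^n),
      hybrid n k a (Fin.natAdd n j)
        = (if parityW (brgc n ⟨a.val/(k+1), h⟩) = false
           then unary k (a.val % (k+1)) else unaryBar k (a.val % (k+1))) j := by
    intro a j h
    simp [hybrid, Fin.append_right]
  have hdivlt : ∀ a : Fin (2^n*(k+1)), a.val/(k+1) < 2^n := by
    intro a
    apply Nat.div_lt_of_lt_mul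
    have e : (k+1) * 2^n = 2^n * (k+1) := Nat.mul_comm _ _
    have := a.isLt
    omega
  have hdiv_ge : ∀ a : Fin (2^n*(k+1)), i ≤ a.val → q ≤ a.val/(k+1) := by
    intro a ha
    exact Nat.div_le_div_right ha
  by_cases hcase : r0 + p ≤ k
  · -- single block
    have hblock : ∀ a : Fin (2^n*(k+1)), i ≤ a.val → a.val ≤ i + p →
        a.val/(k+1) = q ∧ r0 ≤ a.val % (k+1) ∧ a.val % (k+1) ≤ r0 + p := by
      intro a ha1 ha2
      have hd := Nat.div_add_mod a.val (k+1)
      have h2 : a.val < (q+1)*(k+1) := by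
        have e : (q+1)*(k+1) = (k+1)*q + (k+1) := by ring
        omega
      have h3 : a.val/(k+1) < q+1 := (Nat.div_lt_iff_lt_mul hk1).2 h2
      have h4 := hdiv_ge a ha1
      have hdeq : a.val/(k+1) = q := by omega
      rw [hdeq] at hd
      exact ⟨hdeq, by omega, by omega⟩
    have hyg : (fun j => y (Fin.castAdd k j)) = brgc n ⟨q, hqlt⟩ := by
      funext j
      apply hres (Fin.castAdd k j) (brgc n ⟨q, hqlt⟩ j)
      intro a ha1 ha2
      rw [hcg a j (hdivlt a)]
      have emk : (⟨a.val/(k+1), hdivlt a⟩ : Fin (2^n)) = ⟨q, hqlt⟩ :=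
        Fin.ext (hblock a ha1 ha2).1
      rw [emk]
    -- unary forced coordinates
    have hulow : ∀ j : Fin k, j.val < r0 →
        y (Fin.natAdd n j) = !(parityW (brgc n ⟨q, hqlt⟩)) := by
      intro j hj
      apply hres _ _
      intro a ha1 ha2
      rw [hcu a j (hdivlt a)]
      obtain ⟨hdeq, hm1, hm2⟩ := hblock a ha1 ha2
      have emk : (⟨a.val/(k+1), hdivlt a⟩ : Fin (2^n)) = ⟨q, hqlt⟩ := Fin.ext hdeq
      rw [emk]
      cases hpar : parityW (brgc n ⟨q, hqlt⟩) with
      | false =>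
        simp only [if_pos rfl, Bool.not_false]
        show decide (j.val < a.val % (k+1)) = true
        simp only [decide_eq_true_eq]
        omega
      | true =>
        rw [if_neg (by simp)]
        show decide (a.val % (k+1) ≤ j.val) = Bool.not true
        simp only [Bool.not_true, decide_eq_false_iff_not]
        omega
    have huhigh : ∀ j : Fin k, r0 + p ≤ j.val →
        y (Fin.natAdd n j) = parityW (brgc n ⟨q, hqlt⟩) := by
      intro j hj
      apply hres _ _
      intro a ha1 ha2
      rw [hcu a j (hdivlt a)]
      obtain ⟨hdeq, hm1, hm2⟩ := hblock a ha1 ha2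
      have emk : (⟨a.val/(k+1), hdivlt a⟩ : Fin (2^n)) = ⟨q, hqlt⟩ := Fin.ext hdeq
      rw [emk]
      cases hpar : parityW (brgc n ⟨q, hqlt⟩) with
      | false =>
        simp only [if_pos rfl]
        show decide (j.val < a.val % (k+1)) = false
        simp only [decide_eq_false_iff_not]
        omega
      | true =>
        rw [if_neg (by simp)]
        show decide (a.val % (k+1) ≤ j.val) = true
        simp only [decide_eq_true_eq]
        omega
    -- decode
    have hu : r0 ≤ (if parityW (fun j => y (Fin.castAdd k j)) = true
             then decU1 k (fun j => y (Fin.natAdd n j))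
             else decU1 k (fun j => ! y (Fin.natAdd n j)))
        ∧ (if parityW (fun j => y (Fin.castAdd k j)) = true
             then decU1 k (fun j => y (Fin.natAdd n j))
             else decU1 k (fun j => ! y (Fin.natAdd n j))) ≤ r0 + p := by
      rw [hyg]
      cases hpar : parityW (brgc n ⟨q, hqlt⟩) with
      | false =>
        rw [if_neg (by simp)]
        apply decU1_scenD hk _ r0 p hcase
        · intro j hj
          have hjk : j < k := by omega
          have := hulow ⟨j, hjk⟩ hj
          rw [hpar] at this
          simp only [yExt, dif_pos hjk, this]
          simp
        · intro j hj1 hj2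
          have := huhigh ⟨j, hj2⟩ hj1
          rw [hpar] at this
          simp only [yExt, dif_pos hj2, this]
          simp
      | true =>
        rw [if_pos rfl]
        apply decU1_scenD hk _ r0 p hcase
        · intro j hj
          have hjk : j < k := by omega
          have := hulow ⟨j, hjk⟩ hj
          rw [hpar] at this
          simp only [yExt, dif_pos hjk, this]
          simp
        · intro j hj1 hj2
          have := huhigh ⟨j, hj2⟩ hj1
          rw [hpar] at this
          simp only [yExt, dif_pos hj2, this]
    show i ≤ (decHyb n k y).val ∧ (decHyb n k y).val ≤ i + p
    rw [decHyb_val, hyg, brgcInv_brgc]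
    simp only
    obtain ⟨hu1, hu2⟩ := hu
    rw [hyg] at hu1 hu2
    have hmin : min (if parityW (brgc n ⟨q, hqlt⟩) = true
             then decU1 k (fun j => y (Fin.natAdd n j))
             else decU1 k (fun j => ! y (Fin.natAdd n j))) k
        = (if parityW (brgc n ⟨q, hqlt⟩) = true
             then decU1 k (fun j => y (Fin.natAdd n j))
             else decU1 k (fun j => ! y (Fin.natAdd n j))) := min_eq_left (le_trans hu2 hcase)
    rw [hmin]
    have e : q * (k+1) = (k+1) * q := Nat.mul_comm _ _
    omega
  · -- straddling two blocks
    set r1 := r0 + p - (k+1) with hr1def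
    have hr1 : r1 ≤ k/2 := by omega
    have hmidr0 : k/2 < r0 := by omega
    have hr0k : r0 ≤ k := by omega
    have hq1lt : q + 1 < 2^n := by
      have e1 : (k+1)*(q+1) = (k+1)*q + (k+1) := by ring
      have h2 : (k+1)*(q+1) < (k+1)*(2^n) := by
        have e2 : (2:ℕ)^n*(k+1) = (k+1)*(2^n) := Nat.mul_comm _ _
        omega
      exact Nat.lt_of_mul_lt_mul_left h2
    have hblock : ∀ a : Fin (2^n*(k+1)), i ≤ a.val → a.val ≤ i + p →
        (a.val/(k+1) = q ∧ r0 ≤ a.val % (k+1))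
        ∨ (a.val/(k+1) = q + 1 ∧ a.val % (k+1) ≤ r1) := by
      intro a ha1 ha2
      have hd := Nat.div_add_mod a.val (k+1)
      have hmlt : a.val % (k+1) < k+1 := Nat.mod_lt _ hk1
      have h2 : a.val < (q+2)*(k+1) := by
        have e : (q+2)*(k+1) = (k+1)*q + (k+1) + (k+1) := by ring
        omega
      have h3 : a.val/(k+1) < q+2 := (Nat.div_lt_iff_lt_mul hk1).2 h2
      have h4 := hdiv_ge a ha1
      have hdeq : a.val/(k+1) = q ∨ a.val/(k+1) = q+1 := by omega
      rcases hdeq with hdeq | hdeq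
      · left
        rw [hdeq] at hd
        exact ⟨hdeq, by omega⟩
      · right
        rw [hdeq] at hd
        have e1 : (k+1)*(q+1) = (k+1)*q + (k+1) := by ring
        exact ⟨hdeq, by omega⟩
    obtain ⟨j0, hj0⟩ := brgc_succ_agree n q hq1lt
    have hygoff : ∀ j : Fin n, j ≠ j0 →
        y (Fin.castAdd k j) = brgc n ⟨q, hqlt⟩ j := by
      intro j hj
      apply hres _ _
      intro a ha1 ha2
      rw [hcg a j (hdivlt a)]
      rcases hblock a ha1 ha2 with ⟨hdeq, _⟩ | ⟨hdeq, _⟩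
      · have emk : (⟨a.val/(k+1), hdivlt a⟩ : Fin (2^n)) = ⟨q, hqlt⟩ := Fin.ext hdeq
        rw [emk]
      · have emk : (⟨a.val/(k+1), hdivlt a⟩ : Fin (2^n)) = ⟨q+1, hq1lt⟩ := Fin.ext hdeq
        rw [emk]
        exact (hj0 j hj).symm
    have hbne : brgc n (⟨q, hqlt⟩ : Fin (2^n)) ≠ brgc n ⟨q+1, hq1lt⟩ := by
      intro he
      have := congrArg (brgcInv n) he
      rw [brgcInv_brgc, brgcInv_brgc] at this
      simp at this
    have hbdiff : brgc n (⟨q, hqlt⟩ : Fin (2^n)) j0 ≠ brgc n ⟨q+1, hq1lt⟩ j0 := by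
      intro he
      apply hbne
      funext j
      by_cases hj : j = j0
      · rw [hj]; exact he
      · exact hj0 j hj
    have hparflip : parityW (brgc n (⟨q+1, hq1lt⟩ : Fin (2^n)))
        = ! parityW (brgc n (⟨q, hqlt⟩ : Fin (2^n))) := by
      rw [parity_brgc, parity_brgc]
      simp only
      rcases Nat.mod_two_eq_zero_or_one q with h | h
      · have h2 : (q+1) % 2 = 1 := by omega
        simp [h, h2]
      · have h2 : (q+1) % 2 = 0 := by omega
        simp [h, h2]
    have hcases : (fun j => y (Fin.castAdd k j)) = brgc n ⟨q, hqlt⟩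
        ∨ (fun j => y (Fin.castAdd k j)) = brgc n ⟨q+1, hq1lt⟩ := by
      by_cases hc : y (Fin.castAdd k j0) = brgc n ⟨q, hqlt⟩ j0
      · left
        funext j
        by_cases hj : j = j0
        · rw [hj]; exact hc
        · exact hygoff j hj
      · right
        funext j
        by_cases hj : j = j0
        · rw [hj]
          have htri : ∀ a b c : Bool, ¬ a = b → ¬ b = c → a = c := by decide
          exact htri _ _ _ hc hbdiff
        · exact (hygoff j hj).trans (hj0 j hj)
    -- forced unary coordinates
    have huf : ∀ j : Fin k, r1 ≤ j.val → j.val < r0 →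
        y (Fin.natAdd n j) = ! (parityW (brgc n ⟨q, hqlt⟩)) := by
      intro j hj1 hj2
      apply hres _ _
      intro a ha1 ha2
      rw [hcu a j (hdivlt a)]
      rcases hblock a ha1 ha2 with ⟨hdeq, hm⟩ | ⟨hdeq, hm⟩
      · have emk : (⟨a.val/(k+1), hdivlt a⟩ : Fin (2^n)) = ⟨q, hqlt⟩ := Fin.ext hdeq
        rw [emk]
        cases hpar : parityW (brgc n ⟨q, hqlt⟩) with
        | false =>
          simp only [if_pos rfl, Bool.not_false]
          show decide (j.val < a.val % (k+1)) = true
          simp only [decide_eq_true_eq]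
          omega
        | true =>
          rw [if_neg (by simp)]
          show decide (a.val % (k+1) ≤ j.val) = Bool.not true
          simp only [Bool.not_true, decide_eq_false_iff_not]
          omega
      · have emk : (⟨a.val/(k+1), hdivlt a⟩ : Fin (2^n)) = ⟨q+1, hq1lt⟩ := Fin.ext hdeq
        rw [emk, hparflip]
        cases hpar : parityW (brgc n ⟨q, hqlt⟩) with
        | false =>
          rw [if_neg (by simp)]
          show decide (a.val % (k+1) ≤ j.val) = Bool.not false
          simp only [Bool.not_false, decide_eq_true_eq]
          omega
        | true =>
          simp only [Bool.not_true, if_pos rfl]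
          show decide (j.val < a.val % (k+1)) = false
          simp only [decide_eq_false_iff_not]
          omega
    -- conclude
    show i ≤ (decHyb n k y).val ∧ (decHyb n k y).val ≤ i + p
    rw [decHyb_val]
    rcases hcases with hyg | hyg
    · rw [hyg, brgcInv_brgc]
      simp only
      have hu : r0 ≤ (if parityW (brgc n ⟨q, hqlt⟩) = true
               then decU1 k (fun j => y (Fin.natAdd n j))
               else decU1 k (fun j => ! y (Fin.natAdd n j)))
          ∧ (if parityW (brgc n ⟨q, hqlt⟩) = true
               then decU1 k (fun j => y (Fin.natAdd n j))
               else decU1 k (fun j => ! y (Fin.natAdd n j))) ≤ k := by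
        cases hpar : parityW (brgc n ⟨q, hqlt⟩) with
        | false =>
          rw [if_neg (by simp)]
          refine ⟨decU1_scenC hk _ r1 r0 hr1 hmidr0 hr0k ?_, decU1_le hk _⟩
          intro j hj1 hj2
          have hjk : j < k := by omega
          have := huf ⟨j, hjk⟩ hj1 hj2
          rw [hpar] at this
          simp only [yExt, dif_pos hjk, this]
          simp
        | true =>
          rw [if_pos rfl]
          refine ⟨decU1_scenC hk _ r1 r0 hr1 hmidr0 hr0k ?_, decU1_le hk _⟩
          intro j hj1 hj2
          have hjk : j < k := by omega
          have := huf ⟨j, hjk⟩ hj1 hj2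
          rw [hpar] at this
          simp only [yExt, dif_pos hjk, this]
          simp
      obtain ⟨hu1, hu2⟩ := hu
      have hmin : min (if parityW (brgc n ⟨q, hqlt⟩) = true
               then decU1 k (fun j => y (Fin.natAdd n j))
               else decU1 k (fun j => ! y (Fin.natAdd n j))) k
          = (if parityW (brgc n ⟨q, hqlt⟩) = true
               then decU1 k (fun j => y (Fin.natAdd n j))
               else decU1 k (fun j => ! y (Fin.natAdd n j))) := min_eq_left hu2
      rw [hmin]
      have e : q * (k+1) = (k+1) * q := Nat.mul_comm _ _
      omega
    · rw [hyg, brgcInv_brgc]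
      simp only
      have hu : (if parityW (brgc n ⟨q+1, hq1lt⟩) = true
               then decU1 k (fun j => y (Fin.natAdd n j))
               else decU1 k (fun j => ! y (Fin.natAdd n j))) ≤ r1 := by
        rw [hparflip]
        cases hpar : parityW (brgc n ⟨q, hqlt⟩) with
        | false =>
          simp only [Bool.not_false, if_pos rfl]
          apply decU1_scenB hk _ r1 r0 hr1 hmidr0
          intro j hj1 hj2
          have hjk : j < k := by omega
          have := huf ⟨j, hjk⟩ hj1 hj2
          rw [hpar] at this
          simp only [yExt, dif_pos hjk, this]
          simp
        | true =>
          simp only [Bool.not_true]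
          rw [if_neg (by simp)]
          apply decU1_scenB hk _ r1 r0 hr1 hmidr0
          intro j hj1 hj2
          have hjk : j < k := by omega
          have := huf ⟨j, hjk⟩ hj1 hj2
          rw [hpar] at this
          simp only [yExt, dif_pos hjk, this]
          simp
      have hmin : min (if parityW (brgc n ⟨q+1, hq1lt⟩) = true
               then decU1 k (fun j => y (Fin.natAdd n j))
               else decU1 k (fun j => ! y (Fin.natAdd n j))) k
          = (if parityW (brgc n ⟨q+1, hq1lt⟩) = true
               then decU1 k (fun j => y (Fin.natAdd n j))
               else decU1 k (fun j => ! y (Fin.natAdd n j))) := min_eq_left (le_trans hu (by omega))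
      rw [hmin]
      have e : (q+1) * (k+1) = (k+1) * q + (k+1) := by ring
      omega
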